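/- For every real a with 0 < a < 1, the surface integral appearing in the displaced-Werner non-steerability boundary evaluates to (1/2π) ∫_{S²} √((x₁² + x₂²)/(1−a) + x₃²/(1−a)²) dσ(x) = 1/(1−a) + arcsinh(√(a/(1−a))) / √a. Consequently, the boundary correlation strength ξ(a) := [1/(1−a) + arcsinh(√(a/(1−a)))/√a]^{-1} is the unique ξ > 0 satisfying (ξ/2π) ∫_{S²} √((x₁² + x₂²)/(1−a) + x₃²/(1−a)²) dσ(x) = 1. -/

import Mathlib

open MeasureTheory

noncomputable section

/-- The unit sphere `S²` in `ℝ³`. -/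
abbrev S2 : Set (EuclideanSpace ℝ (Fin 3)) := Metric.sphere (0 : EuclideanSpace ℝ (Fin 3)) 1

/-- The surface measure `σ` on the unit sphere `S² ⊂ ℝ³`; it is the 2-dimensional
(Hausdorff) surface measure, with total mass `4π`. -/
def sphereMeasure : Measure (Metric.sphere (0 : EuclideanSpace ℝ (Fin 3)) 1) :=
  (volume : Measure (EuclideanSpace ℝ (Fin 3))).toSphere

namespace DisplacedWerner

open Real Set Metric intervalIntegral

abbrev E3 := EuclideanSpace ℝ (Fin 3)

def fE (b : ℝ) : E3 → ℝ := fun x => Real.sqrt ((x 0 ^ 2 + x 1 ^ 2)/b + x 2 ^ 2/b^2)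

def Gf (b : ℝ) : ℝ → ℝ → ℝ := fun r z =>
  Real.sqrt (r^2/b + z^2/b^2) * Real.exp (-Real.sqrt (r^2 + z^2))

def Hf (b : ℝ) : ℝ × ℝ × ℝ → ℝ := fun p =>
  Real.sqrt ((p.2.1^2 + p.2.2^2)/b + p.1^2/b^2)
    * Real.exp (-Real.sqrt (p.2.1^2 + p.2.2^2 + p.1^2))

def Kf (b : ℝ) : ℝ × ℝ → ℝ := fun q => max q.2 0 * Gf b q.2 q.1

lemma ftc_sqrt (a b : ℝ) (ha : 0 < a) (hb : 0 < b) :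
    ∫ t in (-1:ℝ)..1, Real.sqrt (b + a*t^2)
      = Real.sqrt (b + a) + (b / Real.sqrt a) * Real.arsinh (Real.sqrt a / Real.sqrt b) := by
  have hsa : (0:ℝ) < Real.sqrt a := Real.sqrt_pos.2 ha
  have hsb : (0:ℝ) < Real.sqrt b := Real.sqrt_pos.2 hb
  set c : ℝ := Real.sqrt a / Real.sqrt b with hc
  set k : ℝ := b / (2 * Real.sqrt a) with hk
  set φ : ℝ → ℝ := fun t => t * Real.sqrt (b + a*t^2) / 2 + k * Real.arsinh (c * t) with hφ
  have hpos : ∀ t : ℝ, 0 < b + a * t^2 := fun t => by positivity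
  have hderiv : ∀ t : ℝ, HasDerivAt φ (Real.sqrt (b + a*t^2)) t := by
    intro t
    have hs : (0:ℝ) < Real.sqrt (b + a*t^2) := Real.sqrt_pos.2 (hpos t)
    have hssq : Real.sqrt (b + a*t^2) ^ 2 = b + a*t^2 := Real.sq_sqrt (hpos t).le
    have h1 : HasDerivAt (fun t : ℝ => b + a*t^2) (a*(2*t)) t := by
      simpa using ((hasDerivAt_pow 2 t).const_mul a).const_add b
    have hsq : HasDerivAt (fun t : ℝ => Real.sqrt (b + a*t^2))
        (a*(2*t) / (2 * Real.sqrt (b + a*t^2))) t := by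
      simpa using h1.sqrt (hpos t).ne'
    have h2 := ((hasDerivAt_id t).mul hsq).div_const 2
    have h3 := (((Real.hasDerivAt_arsinh (c * t)).comp t
        ((hasDerivAt_id t).const_mul c))).const_mul k
    have H := h2.add h3
    simp only [id] at H
    refine H.congr_deriv ?_; symm
    have h4 : 1 + (c * t)^2 = (b + a*t^2)/b := by
      rw [hc]; field_simp; rw [Real.sq_sqrt ha.le, Real.sq_sqrt hb.le]; ring
    have h5 : Real.sqrt (1 + (c * t)^2) = Real.sqrt (b + a*t^2) / Real.sqrt b := by
      rw [h4, Real.sqrt_div (hpos t).le]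
    rw [h5, hk, hc]
    field_simp
    linear_combination hssq
  have hcont : Continuous fun t : ℝ => Real.sqrt (b + a*t^2) := by
    have : Continuous fun t : ℝ => b + a*t^2 := by continuity
    exact this.sqrt
  have := intervalIntegral.integral_eq_sub_of_hasDerivAt
    (f := φ) (f' := fun t => Real.sqrt (b + a*t^2))
    (fun t _ => hderiv t) (hcont.intervalIntegrable (-1) 1)
  rw [this]
  simp only [hφ]
  norm_num [Real.arsinh_neg]
  rw [hk]
  ring

lemma gamma3 : ∫ x in Ioi (0:ℝ), x^3 * Real.exp (-x) = 6 := by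
  have h := Real.integral_rpow_mul_exp_neg_mul_Ioi (a := 4) (r := 1) (by norm_num) one_pos
  rw [show (4:ℝ)-1 = ((3:ℕ):ℝ) by norm_num] at h
  simp only [Real.rpow_natCast, one_mul] at h
  rw [h, show (4:ℝ) = (3:ℕ)+1 by norm_num, Real.Gamma_nat_eq_factorial]
  norm_num [Nat.factorial]

lemma integrable_abs_pow_exp (n : ℕ) {c : ℝ} (hc : 0 < c) :
    Integrable (fun t : ℝ => |t|^n * Real.exp (-(c * |t|))) := by
  have hIoi : IntegrableOn (fun t : ℝ => |t|^n * Real.exp (-(c * |t|))) (Ioi 0) := by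
    have h := integrableOn_rpow_mul_exp_neg_mul_rpow (p := 1) (s := (n:ℝ)) (b := c)
      (by exact_mod_cast neg_one_lt_zero.trans_le n.cast_nonneg) one_pos hc
    simp only [Real.rpow_one] at h
    refine h.congr_fun (fun x hx => ?_) measurableSet_Ioi
    rw [abs_of_pos hx]; beta_reduce; rw [Real.rpow_natCast, neg_mul]
  rw [← integrableOn_univ, ← @Iio_union_Ici _ _ (0 : ℝ), integrableOn_union,
    integrableOn_Ici_iff_integrableOn_Ioi]
  refine ⟨?_, hIoi⟩
  rw [← (Measure.measurePreserving_neg (volume : Measure ℝ)).integrableOn_comp_preimage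
      (Homeomorph.neg ℝ).measurableEmbedding]
  simp only [Function.comp_def, abs_neg, neg_preimage, neg_Iio, neg_zero]
  exact hIoi

lemma sqrt_pref_le {b : ℝ} (hb : 0 < b) (hb1 : b ≤ 1) (A z : ℝ) (hA : 0 ≤ A) :
    Real.sqrt (A/b + z^2/b^2) ≤ Real.sqrt (A + z^2)/b := by
  have h1 : Real.sqrt (A + z^2)/b = Real.sqrt ((A + z^2)/b^2) := by
    rw [Real.sqrt_div (by positivity), Real.sqrt_sq hb.le]
  rw [h1]
  apply Real.sqrt_le_sqrt
  have hbb : b^2 ≤ b := by nlinarith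
  have h2 : (1:ℝ)/b ≤ 1/b^2 := one_div_le_one_div_of_le (by positivity) hbb
  have h3 : (A + z^2)/b^2 - (A/b + z^2/b^2) = A*(1/b^2 - 1/b) := by field_simp; ring
  nlinarith [mul_nonneg hA (sub_nonneg.2 h2)]

lemma integrable_Hf {b : ℝ} (hb : 0 < b) (hb1 : b ≤ 1) : Integrable (Hf b) := by
  set E : ℝ → ℝ := fun t => Real.exp (-(3⁻¹ * |t|)) with hE
  have hE0 : Integrable E := by simpa using integrable_abs_pow_exp 0 (by norm_num : (0:ℝ) < 3⁻¹)
  have hE1 : Integrable (fun t : ℝ => |t| * E t) := by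
    simpa using integrable_abs_pow_exp 1 (by norm_num : (0:ℝ) < 3⁻¹)
  have hcont : Continuous (Hf b) := by
    apply Continuous.mul
    · exact Real.continuous_sqrt.comp (by fun_prop)
    · exact Real.continuous_exp.comp (Continuous.neg (Real.continuous_sqrt.comp (by fun_prop)))
  have hmaj : Integrable (fun p : ℝ × ℝ × ℝ =>
      b⁻¹ * ((|p.1| + |p.2.1| + |p.2.2|) * (E p.1 * (E p.2.1 * E p.2.2)))) := by
    have h1 : Integrable (fun p : ℝ × ℝ × ℝ => (|p.1| * E p.1) * (E p.2.1 * E p.2.2)) :=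
      hE1.mul_prod (hE0.mul_prod hE0)
    have h2 : Integrable (fun p : ℝ × ℝ × ℝ => E p.1 * ((|p.2.1| * E p.2.1) * E p.2.2)) :=
      hE0.mul_prod (hE1.mul_prod hE0)
    have h3 : Integrable (fun p : ℝ × ℝ × ℝ => E p.1 * (E p.2.1 * (|p.2.2| * E p.2.2))) :=
      hE0.mul_prod (hE0.mul_prod hE1)
    have := ((h1.add h2).add h3).const_mul b⁻¹
    refine this.congr (Filter.Eventually.of_forall fun p => ?_)
    simp only [Pi.add_apply]
    ring
  refine hmaj.mono' hcont.aestronglyMeasurable (Filter.Eventually.of_forall fun p => ?_)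
  obtain ⟨z, x, y⟩ := p
  have hS : (0:ℝ) ≤ x^2 + y^2 + z^2 := by positivity
  have hQ : (0:ℝ) ≤ Real.sqrt ((x^2+y^2)/b + z^2/b^2) := Real.sqrt_nonneg _
  have habs : |Hf b (z, x, y)| = Hf b (z, x, y) := abs_of_nonneg (by
    exact mul_nonneg hQ (Real.exp_pos _).le)
  rw [Real.norm_eq_abs, habs]
  have h2 : Real.sqrt ((x^2+y^2)/b + z^2/b^2) ≤ Real.sqrt ((x^2+y^2) + z^2)/b :=
    sqrt_pref_le hb hb1 _ _ (by positivity)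
  have h3 : Real.sqrt (x^2+y^2+z^2) ≤ |z| + |x| + |y| := by
    have h : x^2+y^2+z^2 ≤ (|z| + |x| + |y|)^2 := by
      nlinarith [abs_nonneg x, abs_nonneg y, abs_nonneg z, sq_abs x, sq_abs y, sq_abs z,
        mul_nonneg (abs_nonneg z) (abs_nonneg x), mul_nonneg (abs_nonneg z) (abs_nonneg y),
        mul_nonneg (abs_nonneg x) (abs_nonneg y)]
    calc Real.sqrt (x^2+y^2+z^2) ≤ Real.sqrt ((|z| + |x| + |y|)^2) := Real.sqrt_le_sqrt h
      _ = |z| + |x| + |y| := Real.sqrt_sq (by positivity)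
  have h4 : (|z| + |x| + |y|)/3 ≤ Real.sqrt (x^2+y^2+z^2) := by
    have := Real.sqrt_le_sqrt (show ((|z| + |x| + |y|)/3)^2 ≤ x^2+y^2+z^2 by
      nlinarith [sq_abs x, sq_abs y, sq_abs z, sq_nonneg (|z|-|x|), sq_nonneg (|z|-|y|),
        sq_nonneg (|x|-|y|)])
    calc (|z| + |x| + |y|)/3 = Real.sqrt (((|z| + |x| + |y|)/3)^2) :=
          (Real.sqrt_sq (by positivity)).symm
      _ ≤ _ := this
  have hexp : Real.exp (-Real.sqrt (x^2+y^2+z^2))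
      ≤ E z * (E x * E y) := by
    rw [hE]
    simp only []
    rw [← Real.exp_add, ← Real.exp_add]
    apply Real.exp_le_exp.2
    calc -Real.sqrt (x^2+y^2+z^2) ≤ -((|z| + |x| + |y|)/3) := neg_le_neg h4
      _ = -(3⁻¹ * |z|) + (-(3⁻¹ * |x|) + -(3⁻¹ * |y|)) := by ring
  calc Hf b (z, x, y) = Real.sqrt ((x^2+y^2)/b + z^2/b^2)
        * Real.exp (-Real.sqrt (x^2+y^2+z^2)) := rfl
    _ ≤ (Real.sqrt ((x^2+y^2)+z^2)/b) * (E z * (E x * E y)) := by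
        apply mul_le_mul h2 hexp (Real.exp_pos _).le (by positivity)
    _ ≤ ((|z| + |x| + |y|)/b) * (E z * (E x * E y)) := by
        apply mul_le_mul_of_nonneg_right ((div_le_div_iff_of_pos_right hb).2 h3) (by positivity)
    _ = b⁻¹ * ((|z| + |x| + |y|) * (E z * (E x * E y))) := by ring

lemma integrable_Kf {b : ℝ} (hb : 0 < b) (hb1 : b ≤ 1) : Integrable (Kf b) := by
  set E : ℝ → ℝ := fun t => Real.exp (-(2⁻¹ * |t|)) with hE
  have hE0 : Integrable E := by simpa using integrable_abs_pow_exp 0 (by norm_num : (0:ℝ) < 2⁻¹)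
  have hE1 : Integrable (fun t : ℝ => |t| * E t) := by
    simpa using integrable_abs_pow_exp 1 (by norm_num : (0:ℝ) < 2⁻¹)
  have hE2 : Integrable (fun t : ℝ => |t|^2 * E t) := by
    simpa using integrable_abs_pow_exp 2 (by norm_num : (0:ℝ) < 2⁻¹)
  have hcont : Continuous (Kf b) := by
    apply Continuous.mul
    · exact continuous_snd.max continuous_const
    · exact (Real.continuous_sqrt.comp (by fun_prop)).mul
        (Real.continuous_exp.comp (Continuous.neg (Real.continuous_sqrt.comp (by fun_prop))))
  have hmaj : Integrable (fun q : ℝ × ℝ =>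
      b⁻¹ * (E q.1 * (|q.2|^2 * E q.2) + (|q.1| * E q.1) * (|q.2| * E q.2))) := by
    have h1 : Integrable (fun q : ℝ × ℝ => E q.1 * (|q.2|^2 * E q.2)) := hE0.mul_prod hE2
    have h2 : Integrable (fun q : ℝ × ℝ => (|q.1| * E q.1) * (|q.2| * E q.2)) :=
      hE1.mul_prod hE1
    exact (h1.add h2).const_mul b⁻¹
  refine hmaj.mono' hcont.aestronglyMeasurable (Filter.Eventually.of_forall fun q => ?_)
  obtain ⟨z, r⟩ := q
  have hG0 : (0:ℝ) ≤ Gf b r z := mul_nonneg (Real.sqrt_nonneg _) (Real.exp_pos _).le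
  have habs : |Kf b (z, r)| = max r 0 * Gf b r z :=
    abs_of_nonneg (mul_nonneg (le_max_right _ _) hG0)
  rw [Real.norm_eq_abs, habs]
  have hmr : max r 0 ≤ |r| := max_le (le_abs_self r) (abs_nonneg r)
  have h2 : Real.sqrt (r^2/b + z^2/b^2) ≤ Real.sqrt (r^2 + z^2)/b :=
    sqrt_pref_le hb hb1 _ _ (by positivity)
  have h3 : Real.sqrt (r^2+z^2) ≤ |r| + |z| := by
    have h : r^2+z^2 ≤ (|r| + |z|)^2 := by
      nlinarith [sq_abs r, sq_abs z, mul_nonneg (abs_nonneg r) (abs_nonneg z)]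
    calc Real.sqrt (r^2+z^2) ≤ Real.sqrt ((|r| + |z|)^2) := Real.sqrt_le_sqrt h
      _ = |r| + |z| := Real.sqrt_sq (by positivity)
  have h4 : (|r| + |z|)/2 ≤ Real.sqrt (r^2+z^2) := by
    have := Real.sqrt_le_sqrt (show ((|r| + |z|)/2)^2 ≤ r^2+z^2 by
      nlinarith [sq_abs r, sq_abs z, sq_nonneg (|r|-|z|)])
    calc (|r| + |z|)/2 = Real.sqrt (((|r| + |z|)/2)^2) := (Real.sqrt_sq (by positivity)).symm
      _ ≤ _ := this
  have hexp : Real.exp (-Real.sqrt (r^2+z^2)) ≤ E r * E z := by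
    rw [hE]
    simp only []
    rw [← Real.exp_add]
    apply Real.exp_le_exp.2
    calc -Real.sqrt (r^2+z^2) ≤ -((|r| + |z|)/2) := neg_le_neg h4
      _ = -(2⁻¹ * |r|) + -(2⁻¹ * |z|) := by ring
  calc max r 0 * Gf b r z ≤ |r| * Gf b r z := mul_le_mul_of_nonneg_right hmr hG0
    _ ≤ |r| * ((Real.sqrt (r^2+z^2)/b) * (E r * E z)) := by
        apply mul_le_mul_of_nonneg_left _ (abs_nonneg r)
        exact mul_le_mul h2 hexp (Real.exp_pos _).le (by positivity)
    _ ≤ |r| * (((|r| + |z|)/b) * (E r * E z)) := by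
        apply mul_le_mul_of_nonneg_left _ (abs_nonneg r)
        apply mul_le_mul_of_nonneg_right ((div_le_div_iff_of_pos_right hb).2 h3)
          (by positivity)
    _ ≤ b⁻¹ * (E z * (|r|^2 * E r) + (|z| * E z) * (|r| * E r)) := by
        rw [show |r| * (((|r| + |z|)/b) * (E r * E z))
            = b⁻¹ * (E z * (|r|^2 * E r) + (|z| * E z) * (|r| * E r)) by ring]

lemma fE_smul {b : ℝ} (r : ℝ) (hr : 0 ≤ r) (x : E3) : fE b (r • x) = r * fE b x := by
  have h : ∀ i : Fin 3, (r • x) i = r * x i := fun i => rfl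
  simp only [fE, h]
  rw [show ((r*x 0)^2 + (r*x 1)^2)/b + (r*x 2)^2/b^2
      = r^2 * ((x 0^2 + x 1^2)/b + x 2^2/b^2) by ring]
  rw [Real.sqrt_mul (sq_nonneg r), Real.sqrt_sq hr]

lemma stepA (b : ℝ) :
    ∫ x : E3, fE b x * Real.exp (-‖x‖)
      = (∫ ω : Metric.sphere (0:E3) 1, fE b ω ∂(volume : Measure E3).toSphere) * 6 := by
  have hdim : Module.finrank ℝ E3 = 3 := finrank_euclideanSpace_fin
  set F : E3 → ℝ := fun x => fE b x * Real.exp (-‖x‖) with hF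
  set g : Metric.sphere (0:E3) 1 × Ioi (0:ℝ) → ℝ :=
    fun p => F ((p.2 : ℝ) • (p.1 : E3)) with hg
  have hmp := (volume : Measure E3).measurePreserving_homeomorphUnitSphereProd
  rw [hdim] at hmp
  have key : ∀ x : ({(0:E3)}ᶜ : Set E3), g (homeomorphUnitSphereProd E3 x) = F x.1 := by
    intro x
    have h := congrArg Subtype.val ((homeomorphUnitSphereProd E3).symm_apply_apply x)
    rw [homeomorphUnitSphereProd_symm_apply_coe] at h
    simp only [hg]
    rw [h]
  have hgp : ∀ p : Metric.sphere (0:E3) 1 × Ioi (0:ℝ),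
      g p = fE b (p.1 : E3) * ((p.2 : ℝ) * Real.exp (-(p.2 : ℝ))) := by
    rintro ⟨ω, r⟩
    have hr : (0:ℝ) < r := r.2
    have hω : ‖(ω : E3)‖ = 1 := by
      have := ω.2; rwa [mem_sphere_zero_iff_norm] at this
    simp only [hg, hF]
    rw [fE_smul _ hr.le, norm_smul, hω, Real.norm_eq_abs, abs_of_pos hr]
    ring
  calc ∫ x : E3, F x
      = ∫ x : ({(0:E3)}ᶜ : Set E3), F x.1 ∂((volume : Measure E3).comap Subtype.val) := by
        rw [integral_subtype_comap (measurableSet_singleton _).compl,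
          MeasureTheory.restrict_compl_singleton]
    _ = ∫ x : ({(0:E3)}ᶜ : Set E3), g (homeomorphUnitSphereProd E3 x)
          ∂((volume : Measure E3).comap Subtype.val) :=
        (integral_congr_ae (Filter.Eventually.of_forall fun x => (key x).symm))
    _ = ∫ p, g p ∂((volume : Measure E3).toSphere.prod (Measure.volumeIoiPow (3-1))) :=
        hmp.integral_comp (Homeomorph.measurableEmbedding _) g
    _ = ∫ p : Metric.sphere (0:E3) 1 × Ioi (0:ℝ),
          fE b (p.1 : E3) * ((p.2 : ℝ) * Real.exp (-(p.2 : ℝ)))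
          ∂((volume : Measure E3).toSphere.prod (Measure.volumeIoiPow (3-1))) :=
        integral_congr_ae (Filter.Eventually.of_forall fun p => hgp p)
    _ = (∫ ω : Metric.sphere (0:E3) 1, fE b ω ∂(volume : Measure E3).toSphere)
          * ∫ r : Ioi (0:ℝ), ((r : ℝ) * Real.exp (-(r : ℝ))) ∂(Measure.volumeIoiPow 2) :=
        integral_prod_mul (f := fun ω : Metric.sphere (0:E3) 1 => fE b (ω : E3))
          (g := fun r : Ioi (0:ℝ) => (r : ℝ) * Real.exp (-(r : ℝ)))
    _ = _ := by
        congr 1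
        simp only [Measure.volumeIoiPow, ENNReal.ofReal]
        rw [integral_withDensity_eq_integral_smul
          ((measurable_subtype_coe.pow_const _).real_toNNReal),
          integral_subtype_comap measurableSet_Ioi
            (fun a : ℝ => Real.toNNReal (a^2) • (a * Real.exp (-a)))]
        rw [setIntegral_congr_fun measurableSet_Ioi
          (g := fun x : ℝ => x^3 * Real.exp (-x)) (fun x hx => ?_)]
        · exact gamma3
        · rw [NNReal.smul_def, Real.coe_toNNReal _ (pow_nonneg hx.out.le _)]
          simp only [smul_eq_mul]; ring

def ee3 : E3 ≃ᵐ ℝ × ℝ × ℝ :=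
  (MeasurableEquiv.toLp 2 (Fin 3 → ℝ)).symm.trans
    ((MeasurableEquiv.piFinSuccAbove (fun _ => ℝ) 2).trans
      ((MeasurableEquiv.refl ℝ).prodCongr MeasurableEquiv.finTwoArrow))

lemma ee3_mp : MeasurePreserving ee3 volume volume := by
  have hmp2 : MeasurePreserving (MeasurableEquiv.piFinSuccAbove (fun _ : Fin 3 => ℝ) 2)
      volume volume := volume_preserving_piFinSuccAbove (fun _ : Fin 3 => ℝ) 2
  have hmp3 : MeasurePreserving
      (((MeasurableEquiv.refl ℝ).prodCongr MeasurableEquiv.finTwoArrow) :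
        ℝ × (Fin 2 → ℝ) ≃ᵐ ℝ × ℝ × ℝ) volume volume := by
    have := (MeasurePreserving.id (volume : Measure ℝ)).prod
      (volume_preserving_finTwoArrow ℝ)
    exact this
  exact (hmp3.comp hmp2).comp (EuclideanSpace.volume_preserving_symm_measurableEquiv_toLp (Fin 3))

lemma ee3_apply (x : E3) : ee3 x = (x 2, (x 0, x 1)) := rfl

lemma stepB (b : ℝ) :
    ∫ x : E3, fE b x * Real.exp (-‖x‖) = ∫ p : ℝ × ℝ × ℝ, Hf b p := by
  rw [← ee3_mp.integral_comp ee3.measurableEmbedding (Hf b)]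
  refine integral_congr_ae (Filter.Eventually.of_forall fun x => ?_)
  show fE b x * Real.exp (-‖x‖) = Hf b (ee3 x)
  have hnorm : ‖x‖ = Real.sqrt (x 0^2 + x 1^2 + x 2^2) := by
    rw [EuclideanSpace.norm_eq]
    congr 1
    rw [Fin.sum_univ_three]
    simp [Real.norm_eq_abs, sq_abs]
  rw [ee3_apply, hnorm]
  rfl

lemma stepD {b : ℝ} (hb : 0 < b) (hb1 : b ≤ 1) :
    ∫ p : ℝ × ℝ × ℝ, Hf b p = (2*π) * ∫ q : ℝ × ℝ, Kf b q := by
  have hπ := Real.pi_pos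
  have hinner : ∀ z : ℝ, (∫ v : ℝ × ℝ, Hf b (z, v))
      = (2*π) * ∫ r in Ioi (0:ℝ), r * Gf b r z := by
    intro z
    rw [← integral_comp_polarCoord_symm (fun v => Hf b (z, v))]
    have hcongr : ∀ p : ℝ × ℝ,
        p.1 • Hf b (z, polarCoord.symm p) = p.1 * Gf b p.1 z := by
      rintro ⟨s, θ⟩
      have hsymm : polarCoord.symm (s, θ) = (s * Real.cos θ, s * Real.sin θ) := rfl
      rw [hsymm]
      show s • Hf b (z, (s * Real.cos θ, s * Real.sin θ)) = s * Gf b s z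
      have e1 : (s * Real.cos θ)^2 + (s * Real.sin θ)^2 = s^2 := by
        linear_combination s^2 * (Real.sin_sq_add_cos_sq θ)
      rw [Hf, Gf]
      simp only []
      rw [e1, smul_eq_mul]
    rw [integral_congr_ae (Filter.Eventually.of_forall (fun p => hcongr p))]
    rw [show polarCoord.target = Ioi (0:ℝ) ×ˢ Ioo (-π) π from rfl,
      Measure.volume_eq_prod, ← Measure.prod_restrict,
      integral_fun_fst (f := fun s : ℝ => s * Gf b s z)]
    rw [measureReal_restrict_apply_univ, measureReal_def, Real.volume_Ioo, smul_eq_mul,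
      ENNReal.toReal_ofReal (by linarith)]
    ring_nf
  have hKinner : ∀ z : ℝ, (∫ r : ℝ, Kf b (z, r)) = ∫ r in Ioi (0:ℝ), r * Gf b r z := by
    intro z
    rw [← setIntegral_eq_integral_of_forall_compl_eq_zero
      (s := Ioi (0:ℝ)) (f := fun r => Kf b (z, r)) (fun r hr => ?_)]
    · refine setIntegral_congr_fun measurableSet_Ioi (fun r hr => ?_)
      show max r 0 * Gf b r z = r * Gf b r z
      rw [max_eq_left (le_of_lt hr)]
    · show max r 0 * Gf b r z = 0
      rw [max_eq_right (by simpa using hr), zero_mul]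
  rw [Measure.volume_eq_prod]
  rw [integral_prod _ ((Measure.volume_eq_prod ℝ (ℝ × ℝ)) ▸ integrable_Hf hb hb1)]
  calc ∫ z : ℝ, ∫ v : ℝ × ℝ, Hf b (z, v)
      = ∫ z : ℝ, (2*π) * ∫ r in Ioi (0:ℝ), r * Gf b r z :=
        integral_congr_ae (Filter.Eventually.of_forall fun z => hinner z)
    _ = (2*π) * ∫ z : ℝ, ∫ r in Ioi (0:ℝ), r * Gf b r z := integral_const_mul _ _
    _ = (2*π) * ∫ z : ℝ, ∫ r : ℝ, Kf b (z, r) := by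
        congr 1
        exact integral_congr_ae (Filter.Eventually.of_forall fun z => (hKinner z).symm)
    _ = (2*π) * ∫ q : ℝ × ℝ, Kf b q := by
        congr 1
        rw [Measure.volume_eq_prod, integral_prod _
          ((Measure.volume_eq_prod ℝ ℝ) ▸ integrable_Kf hb hb1)]

lemma stepE (a b : ℝ) (ha : 0 < a) (hb : 0 < b) (hab : a + b = 1) :
    ∫ q : ℝ × ℝ, Kf b q
      = 6 * ((1/b) * ∫ t in (-1:ℝ)..1, Real.sqrt (b + a*t^2)) := by
  have hπ := Real.pi_pos
  set A : ℝ → ℝ := fun θ => max (Real.sin θ) 0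
      * (Real.sqrt (b + a * Real.cos θ ^ 2) / b) with hA
  have hAcont : Continuous A := by
    apply Continuous.mul
    · exact Real.continuous_sin.max continuous_const
    · exact (Real.continuous_sqrt.comp (by fun_prop)).div_const b
  rw [← integral_comp_polarCoord_symm (Kf b)]
  have htarget : polarCoord.target = Ioi (0:ℝ) ×ˢ Ioo (-π) π := rfl
  have hcongr : ∀ p ∈ polarCoord.target,
      p.1 • Kf b (polarCoord.symm p) = (p.1^3 * Real.exp (-p.1)) * A p.2 := by
    rintro ⟨s, θ⟩ hp
    rw [htarget] at hp
    have hs : (0:ℝ) < s := hp.1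
    have hsymm : polarCoord.symm (s, θ) = (s * Real.cos θ, s * Real.sin θ) := rfl
    rw [hsymm]
    show s • (max (s * Real.sin θ) 0 * Gf b (s * Real.sin θ) (s * Real.cos θ)) = _
    have e1 : (s * Real.sin θ)^2 + (s * Real.cos θ)^2 = s^2 := by
      linear_combination s^2 * (Real.sin_sq_add_cos_sq θ)
    have e2 : (s * Real.sin θ)^2/b + (s * Real.cos θ)^2/b^2
        = s^2 * ((Real.sin θ^2/b + Real.cos θ^2/b^2)) := by ring
    have e3 : Real.sin θ^2/b + Real.cos θ^2/b^2 = (b + a * Real.cos θ^2)/b^2 := by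
      have hsin : Real.sin θ^2 = 1 - Real.cos θ^2 := by
        linear_combination (Real.sin_sq_add_cos_sq θ)
      rw [hsin]
      have ha' : a = 1 - b := by linarith
      rw [ha']
      field_simp
      ring
    have e4 : Real.sqrt ((b + a * Real.cos θ^2)/b^2)
        = Real.sqrt (b + a * Real.cos θ^2)/b := by
      rw [Real.sqrt_div (by positivity), Real.sqrt_sq hb.le]
    have e5 : max (s * Real.sin θ) 0 = s * max (Real.sin θ) 0 := by
      rw [mul_max_of_nonneg _ _ hs.le, mul_zero]
    rw [Gf, e1, e2, Real.sqrt_mul (sq_nonneg s), Real.sqrt_sq hs.le, e3, e4, e5, hA]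
    simp only [smul_eq_mul]
    ring
  rw [setIntegral_congr_fun (polarCoord.open_target.measurableSet) hcongr]
  rw [htarget, Measure.volume_eq_prod, ← Measure.prod_restrict,
    integral_prod_mul (f := fun s : ℝ => s^3 * Real.exp (-s)) (g := A)]
  rw [gamma3]
  congr 1
  have hun : Ioc (-π) 0 ∪ Ioo 0 π = Ioo (-π) π :=
    Ioc_union_Ioo_eq_Ioo (by linarith) hπ
  have hdisj : Disjoint (Ioc (-π) (0:ℝ)) (Ioo 0 π) := by
    rw [Set.disjoint_left]
    rintro θ h1 h2
    exact absurd h2.1 (not_lt.2 h1.2)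
  rw [← hun, setIntegral_union hdisj measurableSet_Ioo
    (hAcont.integrableOn_Ioc) ((hAcont.integrableOn_Ioc).mono_set Ioo_subset_Ioc_self)]
  rw [setIntegral_eq_zero_of_forall_eq_zero (fun θ hθ => ?_), zero_add]
  swap
  · have : Real.sin θ ≤ 0 :=
      Real.sin_nonpos_of_nonpos_of_neg_pi_le hθ.2 hθ.1.le
    rw [hA]
    simp only [max_eq_right this]
    simp
  rw [setIntegral_congr_fun measurableSet_Ioo
    (g := fun θ => (1/b) * (Real.sin θ * Real.sqrt (b + a * Real.cos θ^2)))
    (fun θ hθ => ?_)]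
  swap
  · have hsin : 0 ≤ Real.sin θ := Real.sin_nonneg_of_nonneg_of_le_pi hθ.1.le hθ.2.le
    rw [hA]
    simp only [max_eq_left hsin]
    ring
  rw [← integral_Ioc_eq_integral_Ioo, ← intervalIntegral.integral_of_le hπ.le]
  rw [intervalIntegral.integral_const_mul]
  congr 1
  have hsub := intervalIntegral.integral_comp_smul_deriv
    (a := 0) (b := π)
    (f := fun θ => Real.cos θ) (f' := fun θ => -Real.sin θ)
    (g := fun t => Real.sqrt (b + a * t^2))
    (fun x _ => Real.hasDerivAt_cos x) (Real.continuous_sin.neg.continuousOn)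
    (by fun_prop)
  simp only [Function.comp, smul_eq_mul, neg_mul, Real.cos_zero, Real.cos_pi] at hsub
  rw [intervalIntegral.integral_neg] at hsub
  have := neg_eq_iff_eq_neg.1 hsub
  rw [this, ← intervalIntegral.integral_symm]

lemma sphere_integral_value (a b : ℝ) (ha : 0 < a) (hb : 0 < b) (hab : a + b = 1) :
    ∫ ω : Metric.sphere (0:E3) 1, fE b (ω : E3) ∂(volume : Measure E3).toSphere
      = 2 * π * (1/b + Real.arsinh (Real.sqrt a / Real.sqrt b) / Real.sqrt a) := by
  have hb1 : b ≤ 1 := by linarith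
  have hsa : (0:ℝ) < Real.sqrt a := Real.sqrt_pos.2 ha
  have hF := ftc_sqrt a b ha hb
  rw [show b + a = (1:ℝ) by linarith, Real.sqrt_one] at hF
  have key : (∫ ω : Metric.sphere (0:E3) 1, fE b (ω : E3)
          ∂(volume : Measure E3).toSphere) * 6
      = 2 * π * (6 * ((1/b) * (1 + (b / Real.sqrt a)
          * Real.arsinh (Real.sqrt a / Real.sqrt b)))) := by
    rw [← stepA b, stepB b, stepD hb hb1, stepE a b ha hb hab, hF]
  have expand : 2 * π * (6 * ((1/b) * (1 + (b / Real.sqrt a)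
          * Real.arsinh (Real.sqrt a / Real.sqrt b))))
      = (2 * π * (1/b + Real.arsinh (Real.sqrt a / Real.sqrt b) / Real.sqrt a)) * 6 := by
    field_simp
  rw [expand] at key
  exact mul_right_cancel₀ (by norm_num) key

end DisplacedWerner

open DisplacedWerner Real

/-- For `0 < a < 1`, the displaced-Werner boundary integral evaluates to
`(1/2π) ∫_{S²} √((x₁²+x₂²)/(1−a) + x₃²/(1−a)²) dσ = 1/(1−a) + arcsinh(√(a/(1−a)))/√a`,
and consequently `ξ(a) = [1/(1−a) + arcsinh(√(a/(1−a)))/√a]⁻¹` is the unique `ξ > 0` with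
`(ξ/2π) ∫_{S²} √((x₁²+x₂²)/(1−a) + x₃²/(1−a)²) dσ = 1`. -/
theorem displaced_werner_boundary (a : ℝ) (ha0 : 0 < a) (ha1 : a < 1) :
    (2 * Real.pi)⁻¹ *
      (∫ x : Metric.sphere (0 : EuclideanSpace ℝ (Fin 3)) 1,
        Real.sqrt (((x : EuclideanSpace ℝ (Fin 3)) 0 ^ 2 +
            (x : EuclideanSpace ℝ (Fin 3)) 1 ^ 2) / (1 - a) +
          (x : EuclideanSpace ℝ (Fin 3)) 2 ^ 2 / (1 - a) ^ 2) ∂sphereMeasure) =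
      (1 - a)⁻¹ + Real.arsinh (Real.sqrt (a / (1 - a))) / Real.sqrt a ∧
    ∀ ξ : ℝ, 0 < ξ →
      (ξ / (2 * Real.pi) *
        (∫ x : Metric.sphere (0 : EuclideanSpace ℝ (Fin 3)) 1,
          Real.sqrt (((x : EuclideanSpace ℝ (Fin 3)) 0 ^ 2 +
              (x : EuclideanSpace ℝ (Fin 3)) 1 ^ 2) / (1 - a) +
            (x : EuclideanSpace ℝ (Fin 3)) 2 ^ 2 / (1 - a) ^ 2) ∂sphereMeasure) = 1 ↔
        ξ = ((1 - a)⁻¹ + Real.arsinh (Real.sqrt (a / (1 - a))) / Real.sqrt a)⁻¹) := by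
  have hb : 0 < 1 - a := by linarith
  have hπ := Real.pi_pos
  have hsa : (0:ℝ) < Real.sqrt a := Real.sqrt_pos.2 ha0
  have hval := sphere_integral_value a (1-a) ha0 hb (by ring)
  have hIeq : (∫ x : Metric.sphere (0 : EuclideanSpace ℝ (Fin 3)) 1,
        Real.sqrt (((x : EuclideanSpace ℝ (Fin 3)) 0 ^ 2 +
            (x : EuclideanSpace ℝ (Fin 3)) 1 ^ 2) / (1 - a) +
          (x : EuclideanSpace ℝ (Fin 3)) 2 ^ 2 / (1 - a) ^ 2) ∂sphereMeasure)
      = ∫ ω : Metric.sphere (0:E3) 1, fE (1-a) (ω : E3)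
          ∂(volume : Measure E3).toSphere := by
    rfl
  have hdiv : Real.sqrt (a / (1 - a)) = Real.sqrt a / Real.sqrt (1-a) :=
    Real.sqrt_div ha0.le _
  set R : ℝ := (1 - a)⁻¹ + Real.arsinh (Real.sqrt (a / (1 - a))) / Real.sqrt a with hR
  have hRval : (2 * Real.pi)⁻¹ * (∫ x : Metric.sphere (0 : EuclideanSpace ℝ (Fin 3)) 1,
        Real.sqrt (((x : EuclideanSpace ℝ (Fin 3)) 0 ^ 2 +
            (x : EuclideanSpace ℝ (Fin 3)) 1 ^ 2) / (1 - a) +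
          (x : EuclideanSpace ℝ (Fin 3)) 2 ^ 2 / (1 - a) ^ 2) ∂sphereMeasure) = R := by
    rw [hIeq, hval, hR, hdiv]
    field_simp
  have hRpos : 0 < R := by
    rw [hR]
    have h1 : 0 ≤ Real.arsinh (Real.sqrt (a / (1 - a))) :=
      by rw [← Real.arsinh_zero]; exact Real.arsinh_le_arsinh.2 (Real.sqrt_nonneg _)
    have : 0 ≤ Real.arsinh (Real.sqrt (a / (1 - a))) / Real.sqrt a :=
      div_nonneg h1 hsa.le
    have h2 : (0:ℝ) < (1-a)⁻¹ := by positivity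
    linarith
  refine ⟨hRval, fun ξ hξ => ?_⟩
  have hIval : (∫ x : Metric.sphere (0 : EuclideanSpace ℝ (Fin 3)) 1,
        Real.sqrt (((x : EuclideanSpace ℝ (Fin 3)) 0 ^ 2 +
            (x : EuclideanSpace ℝ (Fin 3)) 1 ^ 2) / (1 - a) +
          (x : EuclideanSpace ℝ (Fin 3)) 2 ^ 2 / (1 - a) ^ 2) ∂sphereMeasure)
      = 2 * Real.pi * R := by
    rw [← hRval, ← mul_assoc, mul_inv_cancel₀ (by positivity), one_mul]
  rw [hIval]
  constructor
  · intro h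
    have hξR : ξ * R = 1 := by
      rw [← h]; field_simp
    have := eq_div_of_mul_eq hRpos.ne' hξR
    rw [this, one_div]
  · intro h
    rw [h]
    field_simp [hRpos.ne']
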